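/- For every real number p, there is no vector f ∈ ℝ¹² satisfying ⟨f, a₁⟩ = ⟨f, a₂⟩ = ⟨f, b₁⟩ = ⟨f, b₂⟩ = 0 and ⟨f, v⟩ > 0 (with respect to the standard inner product on ℝ¹²), where a₁, a₂, b₁, b₂, v are the vectors defined from p as in the context. Consequently no driving force makes the standard folding of the 3×3 Miura-ori uniquely self-foldable. -/

import Mathlib

open scoped InnerProductSpace

-- Folding-angle coordinates of the 12 creases of a 3×3 Miura-ori.

/-- Basis tangent vector `a₁`. -/
def miuraA1 : EuclideanSpace ℝ (Fin 12) := WithLp.toLp 2 (![0,0,1,1,1,0,0,0,0,0,0,0] : Fin 12 → ℝ)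

/-- Basis tangent vector `a₂`. -/
def miuraA2 : EuclideanSpace ℝ (Fin 12) := WithLp.toLp 2 (![0,0,0,0,0,0,0,1,1,1,0,0] : Fin 12 → ℝ)

/-- Basis tangent vector `b₁` (p is the folding multiplier). -/
def miuraB1 (p : ℝ) : EuclideanSpace ℝ (Fin 12) := WithLp.toLp 2 (![1,0,-p,p,p,1,0,p,-p,-p,1,0] : Fin 12 → ℝ)

/-- Basis tangent vector `b₂` (p is the folding multiplier). -/
def miuraB2 (p : ℝ) : EuclideanSpace ℝ (Fin 12) := WithLp.toLp 2 (![0,1,-p,-p,p,0,1,p,p,-p,0,1] : Fin 12 → ℝ)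

/-- Tangent vector of the standard folding mode of the 3×3 Miura-ori. -/
def miuraV (p : ℝ) : EuclideanSpace ℝ (Fin 12) := WithLp.toLp 2 (![1,-1,-p,p,-p,1,-1,p,-p,p,1,-1] : Fin 12 → ℝ)
/-- No driving force makes the standard folding of the 3×3 Miura-ori uniquely
self-foldable: there is no vector `f` orthogonal to `a₁, a₂, b₁, b₂` with
positive inner product with `v`. -/
theorem miura_no_driving_force (p : ℝ) :
    ¬ ∃ f : EuclideanSpace ℝ (Fin 12),
      ⟪f, miuraA1⟫_ℝ = 0 ∧ ⟪f, miuraA2⟫_ℝ = 0 ∧ ⟪f, miuraB1 p⟫_ℝ = 0 ∧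
        ⟪f, miuraB2 p⟫_ℝ = 0 ∧ 0 < ⟪f, miuraV p⟫_ℝ := by
  rintro ⟨f, h1, h2, h3, h4, h5⟩
  have hv : miuraV p = miuraB1 p - miuraB2 p - p • miuraA1 + p • miuraA2 := by
    ext i
    fin_cases i <;>
      norm_num [miuraA1, miuraA2, miuraB1, miuraB2, miuraV, Matrix.cons_val_succ,
        Matrix.cons_val_zero, Fin.succ]
  rw [hv] at h5
  simp only [inner_add_right, inner_sub_right, inner_smul_right, h1, h2, h3, h4] at h5
  simp at h5
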